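/- For n ≥ 2, the stabilizer of the layer H_0 (the set of 0-simplices) under the action of Aut(H(∂Δⁿ)) on the set of layers is isomorphic to Aut(∂Δⁿ), i.e., every automorphism of the Hasse diagram of ∂Δⁿ fixing H_0 setwise is induced by a unique simplicial automorphism of ∂Δⁿ. -/

import Mathlib

open Finset

/-- An abstract simplicial complex on vertex type `V`. -/
structure SComplex (V : Type) [DecidableEq V] where
  faces : Set (Finset V)
  nonempty_of_mem : ∀ {s : Finset V}, s ∈ faces → s.Nonempty
  down_closed : ∀ {s t : Finset V}, s ∈ faces → t ⊆ s → t.Nonempty → t ∈ faces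

variable {V : Type} [DecidableEq V]

/-- A primitive vector: a codimension-1 face pair of simplices of `K`. -/
def IsPrimitive (K : SComplex V) (p : Finset V × Finset V) : Prop :=
  p.1 ∈ K.faces ∧ p.2 ∈ K.faces ∧ p.1 ⊆ p.2 ∧ p.2.card = p.1.card + 1

/-- A discrete vector field on `K`. -/
def IsDVF (K : SComplex V) (W : Set (Finset V × Finset V)) : Prop :=
  (∀ p ∈ W, IsPrimitive K p) ∧
    ∀ p ∈ W, ∀ q ∈ W, p ≠ q →
      p.1 ≠ q.1 ∧ p.1 ≠ q.2 ∧ p.2 ≠ q.1 ∧ p.2 ≠ q.2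

/-- `W` admits a nontrivial closed `V`-path. -/
def HasClosedPath (W : Set (Finset V × Finset V)) : Prop :=
  ∃ (k : ℕ) (α β : ℕ → Finset V), 1 ≤ k ∧
    (∀ i < k, (α i, β i) ∈ W) ∧
    (∀ i < k, α (i + 1) ⊆ β i ∧ (β i).card = (α (i + 1)).card + 1 ∧ α (i + 1) ≠ α i) ∧
    α k = α 0

/-- A gradient vector field on `K`. -/
def IsGVF (K : SComplex V) (W : Set (Finset V × Finset V)) : Prop :=
  IsDVF K W ∧ ¬ HasClosedPath W

theorem IsGVF.mono {K : SComplex V} {W W' : Set (Finset V × Finset V)}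
    (h : IsGVF K W) (hsub : W' ⊆ W) : IsGVF K W' := by
  obtain ⟨⟨h1, h2⟩, h3⟩ := h
  refine ⟨⟨fun p hp => h1 p (hsub hp), fun p hp q hq hpq => h2 p (hsub hp) q (hsub hq) hpq⟩, ?_⟩
  rintro ⟨k, α, β, hk, hW, hrest, hclosed⟩
  exact h3 ⟨k, α, β, hk, fun i hi => hsub (hW i hi), hrest, hclosed⟩

/-- The vertices of the Morse complex of `K`: primitive vectors. -/
def MVert (K : SComplex V) : Type := {p : Finset V × Finset V // IsPrimitive K p}

instance (K : SComplex V) : DecidableEq (MVert K) :=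
  Subtype.instDecidableEq

/-- The Morse complex of `K`: simplices are gradient vector fields. -/
def morse (K : SComplex V) : SComplex (MVert K) where
  faces := {s : Finset (MVert K) | s.Nonempty ∧
    IsGVF K {p | ∃ x ∈ s, (x : {p : Finset V × Finset V // IsPrimitive K p}).val = p}}
  nonempty_of_mem := fun h => h.1
  down_closed := by
    rintro s t ⟨-, hgvf⟩ hts htne
    exact ⟨htne, hgvf.mono (by rintro p ⟨x, hx, rfl⟩; exact ⟨x, hts hx, rfl⟩)⟩

/-- The image of a primitive vector under a vertex map. -/
def indVert (e : V → V) (p : Finset V × Finset V) : Finset V × Finset V :=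
  (p.1.image e, p.2.image e)

/-- The automorphism group of a simplicial complex, as a subgroup of the
permutations of its vertex set. -/
def autK (K : SComplex V) : Subgroup (Equiv.Perm V) where
  carrier := {e | ∀ s : Finset V, s ∈ K.faces ↔ s.image e ∈ K.faces}
  one_mem' := by intro s; simp
  mul_mem' := by
    intro a b ha hb s
    rw [hb s]
    have : (s.image b).image a = s.image (a * b) := by
      rw [Finset.image_image]; rfl
    rw [ha (s.image b), this]
  inv_mem' := by
    intro a ha s
    have := ha (s.image ⇑(a⁻¹))
    have h2 : (s.image ⇑(a⁻¹)).image ⇑a = s := by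
      rw [Finset.image_image]
      simp [Function.comp_def]
    rw [h2] at this
    exact this.symm

/-- The Hasse diagram of `K`, as a simple graph on the simplices of `K`. -/
def hasse (K : SComplex V) : SimpleGraph {s : Finset V // s ∈ K.faces} where
  Adj σ τ := (σ.1 ⊆ τ.1 ∧ τ.1.card = σ.1.card + 1) ∨ (τ.1 ⊆ σ.1 ∧ σ.1.card = τ.1.card + 1)
  symm := by tauto
  loopless := ⟨by rintro σ (⟨-, h⟩ | ⟨-, h⟩) <;> omega⟩

/-- The automorphism group of a simple graph, as a subgroup of the permutations
of its vertex set. -/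
def autG {α : Type} (G : SimpleGraph α) : Subgroup (Equiv.Perm α) where
  carrier := {e | ∀ u v, G.Adj (e u) (e v) ↔ G.Adj u v}
  one_mem' := by intro u v; simp
  mul_mem' := by
    intro a b ha hb u v
    rw [show ((a * b : Equiv.Perm α) u) = a (b u) from rfl,
      show ((a * b : Equiv.Perm α) v) = a (b v) from rfl, ha, hb]
  inv_mem' := by
    intro a ha u v
    have := ha (a⁻¹ u) (a⁻¹ v)
    simpa using this.symm

/-- The boundary of the `n`-simplex: all nonempty proper subsets of the
`(n+1)`-element vertex set. -/
def bdSimplex (n : ℕ) : SComplex (Fin (n + 1)) where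
  faces := {s | s.Nonempty ∧ s ≠ Finset.univ}
  nonempty_of_mem := fun h => h.1
  down_closed := by
    rintro s t ⟨-, hs⟩ hts htne
    refine ⟨htne, fun h => hs ?_⟩
    subst h
    exact Finset.univ_subset_iff.mp hts

instance (n : ℕ) : DecidablePred (· ∈ (bdSimplex n).faces) :=
  fun s => inferInstanceAs (Decidable (s.Nonempty ∧ s ≠ Finset.univ))

/-- The vertices of the Hasse diagram of `∂Δⁿ`: the simplices of `∂Δⁿ`. -/
abbrev BdVert (n : ℕ) : Type := {s : Finset (Fin (n + 1)) // s ∈ (bdSimplex n).faces}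

instance (n : ℕ) : Fintype (BdVert n) := Subtype.fintype _

instance instHasseAdjDecidable (K : SComplex V) : DecidableRel (hasse K).Adj :=
  fun a b => inferInstanceAs
    (Decidable ((a.1 ⊆ b.1 ∧ b.1.card = a.1.card + 1) ∨ (b.1 ⊆ a.1 ∧ a.1.card = b.1.card + 1)))

/-- The `i`-th layer of the Hasse diagram of `∂Δⁿ`: the simplices of
dimension `i` (cardinality `i + 1`). -/
def Hset (n i : ℕ) : Set (BdVert n) := {v | v.val.card = i + 1}

/-- The subgroup of automorphisms of the Hasse diagram of `∂Δⁿ` fixing the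
layer `H_0` setwise. -/
def stabH0 (n : ℕ) : Subgroup (Equiv.Perm (BdVert n)) where
  carrier := {e | e ∈ autG (hasse (bdSimplex n)) ∧ ⇑e '' Hset n 0 = Hset n 0}
  one_mem' := ⟨(autG (hasse (bdSimplex n))).one_mem, by simp⟩
  mul_mem' := by
    rintro a b ⟨ha1, ha2⟩ ⟨hb1, hb2⟩
    refine ⟨(autG (hasse (bdSimplex n))).mul_mem ha1 hb1, ?_⟩
    rw [Equiv.Perm.coe_mul, Set.image_comp, hb2, ha2]
  inv_mem' := by
    rintro a ⟨ha1, ha2⟩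
    refine ⟨(autG (hasse (bdSimplex n))).inv_mem ha1, ?_⟩
    conv_lhs => rw [← ha2]
    rw [← Set.image_comp]
    simp [Equiv.Perm.inv_def]


section StabAux

variable {n : ℕ}

lemma mem_bd_faces {s : Finset (Fin (n + 1))} :
    s ∈ (bdSimplex n).faces ↔ s.Nonempty ∧ s ≠ Finset.univ := Iff.rfl

lemma mem_bd_faces_card {s : Finset (Fin (n + 1))} :
    s ∈ (bdSimplex n).faces ↔ 0 < s.card ∧ s.card ≠ n + 1 := by
  rw [mem_bd_faces, ← Finset.card_pos]
  constructor
  · rintro ⟨h1, h2⟩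
    refine ⟨h1, fun hc => h2 ?_⟩
    exact Finset.eq_univ_of_card s (by simpa using hc)
  · rintro ⟨h1, h2⟩
    refine ⟨h1, fun hu => h2 ?_⟩
    subst hu; simp

lemma image_mem_bd_iff (σ : Equiv.Perm (Fin (n + 1))) (s : Finset (Fin (n + 1))) :
    s.image ⇑σ ∈ (bdSimplex n).faces ↔ s ∈ (bdSimplex n).faces := by
  rw [mem_bd_faces_card, mem_bd_faces_card, Finset.card_image_of_injective s σ.injective]

lemma mem_autK_bd (σ : Equiv.Perm (Fin (n + 1))) : σ ∈ autK (bdSimplex n) :=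
  fun s => (image_mem_bd_iff σ s).symm

lemma mem_stabH0 {e : Equiv.Perm (BdVert n)} :
    e ∈ stabH0 n ↔ e ∈ autG (hasse (bdSimplex n)) ∧ ⇑e '' Hset n 0 = Hset n 0 := Iff.rfl

lemma hasse_adj {K : SComplex V} {u v : {s : Finset V // s ∈ K.faces}} :
    (hasse K).Adj u v ↔
      (u.1 ⊆ v.1 ∧ v.1.card = u.1.card + 1) ∨ (v.1 ⊆ u.1 ∧ u.1.card = v.1.card + 1) := Iff.rfl

/-- The induced permutation on simplices of `∂Δⁿ`. -/
def indPerm (σ : Equiv.Perm (Fin (n + 1))) : Equiv.Perm (BdVert n) :=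
  σ.finsetCongr.subtypeEquiv (fun s => by
    rw [Equiv.finsetCongr_apply, Finset.map_eq_image]
    exact (image_mem_bd_iff σ s).symm)

@[simp] lemma indPerm_apply (σ : Equiv.Perm (Fin (n + 1))) (v : BdVert n) :
    (indPerm σ v).val = v.val.image ⇑σ := by
  simp [indPerm, Finset.map_eq_image]

lemma indPerm_mem (σ : Equiv.Perm (Fin (n + 1))) : indPerm σ ∈ stabH0 n := by
  rw [mem_stabH0]
  constructor
  · intro u v
    rw [hasse_adj, hasse_adj]
    simp only [indPerm_apply, Finset.card_image_of_injective _ σ.injective,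
      Finset.image_subset_image_iff σ.injective]
  · ext v
    simp only [Set.mem_image, Hset, Set.mem_setOf_eq]
    constructor
    · rintro ⟨u, hu, rfl⟩
      rw [indPerm_apply, Finset.card_image_of_injective _ σ.injective]
      exact hu
    · intro hv
      refine ⟨(indPerm σ)⁻¹ v, ?_, Equiv.apply_symm_apply _ _⟩
      have h1 : (indPerm σ ((indPerm σ)⁻¹ v)).val = ((indPerm σ)⁻¹ v).val.image ⇑σ :=
        indPerm_apply σ _
      rw [show (indPerm σ) ((indPerm σ)⁻¹ v) = v from Equiv.apply_symm_apply _ _] at h1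
      have hc : (((indPerm σ)⁻¹ v).val.image ⇑σ).card = v.val.card := by rw [← h1]
      rw [Finset.card_image_of_injective _ σ.injective] at hc
      show ((indPerm σ)⁻¹ v).val.card = 0 + 1
      rw [hc]; exact hv

/-- The homomorphism from `Aut(∂Δⁿ)` to the stabilizer of `H₀`. -/
def psi (n : ℕ) : autK (bdSimplex n) →* stabH0 n where
  toFun σ := ⟨indPerm σ.1, indPerm_mem σ.1⟩
  map_one' := by
    apply Subtype.ext; apply Equiv.ext; intro v; apply Subtype.ext
    simp
  map_mul' a b := by
    apply Subtype.ext; apply Equiv.ext; intro v; apply Subtype.ext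
    show (indPerm (↑a * ↑b) v).val = (indPerm ↑a (indPerm ↑b v)).val
    simp [Finset.image_image, Function.comp_def]

lemma singleton_face (hn : 1 ≤ n) (x : Fin (n + 1)) :
    ({x} : Finset (Fin (n + 1))) ∈ (bdSimplex n).faces := by
  rw [mem_bd_faces_card]
  simp only [Finset.card_singleton]
  omega

/-- Every element of the stabilizer preserves each layer. -/
lemma card_e_apply : ∀ k : ℕ, ∀ e : Equiv.Perm (BdVert n), e ∈ stabH0 n →
    ∀ v : BdVert n, v.val.card = k + 1 → (e v).val.card = k + 1 := by
  intro k
  induction k using Nat.strong_induction_on with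
  | _ k ih =>
  intro e he v hv
  cases k with
  | zero =>
    have h1 : v ∈ Hset n 0 := hv
    have h2 : e v ∈ ⇑e '' Hset n 0 := ⟨v, h1, rfl⟩
    rw [(mem_stabH0.mp he).2] at h2
    exact h2
  | succ k =>
    obtain ⟨x, hx⟩ := v.2.1
    have hvu : v.val ≠ Finset.univ := v.2.2
    have hu_card : (v.val.erase x).card = k + 1 := by
      rw [Finset.card_erase_of_mem hx, hv]; omega
    have hu_sub : v.val.erase x ⊆ v.val := Finset.erase_subset _ _
    have hu_face : v.val.erase x ∈ (bdSimplex n).faces := by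
      rw [mem_bd_faces]
      exact ⟨Finset.card_pos.mp (by omega),
        fun h => hvu (Finset.univ_subset_iff.mp (h ▸ hu_sub))⟩
    have hadj : (hasse (bdSimplex n)).Adj ⟨v.val.erase x, hu_face⟩ v := by
      rw [hasse_adj]
      exact Or.inl ⟨hu_sub, show v.val.card = (v.val.erase x).card + 1 by omega⟩
    have hadj' := ((mem_stabH0.mp he).1 _ _).mpr hadj
    have hcu : (e ⟨v.val.erase x, hu_face⟩).val.card = k + 1 :=
      ih k (Nat.lt_succ_self k) e he _ hu_card
    rw [hasse_adj] at hadj'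
    rcases hadj' with ⟨_, hc⟩ | ⟨_, hc⟩
    · omega
    · exfalso
      have hk1 : 0 < (e v).val.card := Finset.card_pos.mpr (e v).2.1
      have hk2 : 1 ≤ k := by omega
      have hinv := ih (k - 1) (by omega) e⁻¹ ((stabH0 n).inv_mem he) (e v) (by omega)
      rw [Equiv.Perm.coe_inv, Equiv.symm_apply_apply] at hinv
      omega

lemma card_e_apply' {e : Equiv.Perm (BdVert n)} (he : e ∈ stabH0 n) (v : BdVert n) :
    (e v).val.card = v.val.card := by
  have h1 : 0 < v.val.card := Finset.card_pos.mpr v.2.1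
  have h2 := card_e_apply (v.val.card - 1) e he v (by omega)
  omega

/-- An element of the stabilizer acts as the induced map of its action on vertices. -/
lemma e_apply_eq_image (hn : 1 ≤ n) {e : Equiv.Perm (BdVert n)} (he : e ∈ stabH0 n)
    (σ : Fin (n + 1) → Fin (n + 1)) (hinj : Function.Injective σ)
    (hσ : ∀ x : Fin (n + 1), (e ⟨{x}, singleton_face hn x⟩).val = {σ x}) :
    ∀ (k : ℕ) (s : Finset (Fin (n + 1))) (hs : s ∈ (bdSimplex n).faces), s.card = k + 1 →
      (e ⟨s, hs⟩).val = s.image σ := by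
  intro k
  induction k using Nat.strong_induction_on with
  | _ k ih =>
  intro s hs hcard
  cases k with
  | zero =>
    obtain ⟨x, rfl⟩ := Finset.card_eq_one.mp hcard
    rw [Finset.image_singleton]
    exact hσ x
  | succ k =>
    have hsub : s.image σ ⊆ (e ⟨s, hs⟩).val := by
      intro z hz
      obtain ⟨y, hy, rfl⟩ := Finset.mem_image.mp hz
      obtain ⟨x, hxs, hxy⟩ := Finset.exists_mem_ne (s := s) (by omega) y
      have hyt : y ∈ s.erase x := Finset.mem_erase.mpr ⟨Ne.symm hxy, hy⟩
      have htcard : (s.erase x).card = k + 1 := by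
        rw [Finset.card_erase_of_mem hxs, hcard]; omega
      have htsub : s.erase x ⊆ s := Finset.erase_subset _ _
      have ht_face : s.erase x ∈ (bdSimplex n).faces := by
        rw [mem_bd_faces]
        exact ⟨Finset.card_pos.mp (by omega),
          fun h => (mem_bd_faces.mp hs).2 (Finset.univ_subset_iff.mp (h ▸ htsub))⟩
      have hadj : (hasse (bdSimplex n)).Adj ⟨s.erase x, ht_face⟩ ⟨s, hs⟩ := by
        rw [hasse_adj]
        exact Or.inl ⟨htsub, show s.card = (s.erase x).card + 1 by omega⟩
      have hadj' := ((mem_stabH0.mp he).1 _ _).mpr hadj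
      have hct : (e ⟨s.erase x, ht_face⟩).val.card = k + 1 := by
        rw [card_e_apply' he]; exact htcard
      have hcs : (e ⟨s, hs⟩).val.card = k + 1 + 1 := by
        rw [card_e_apply' he]; exact hcard
      rw [hasse_adj] at hadj'
      have hsub2 : (e ⟨s.erase x, ht_face⟩).val ⊆ (e ⟨s, hs⟩).val := by
        rcases hadj' with ⟨h1, _⟩ | ⟨_, h2⟩
        · exact h1
        · exfalso; omega
      have hteq : (e ⟨s.erase x, ht_face⟩).val = (s.erase x).image σ :=
        ih k (Nat.lt_succ_self k) (s.erase x) ht_face htcard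
      apply hsub2
      rw [hteq]
      exact Finset.mem_image_of_mem σ hyt
    have hcard_im : (s.image σ).card = k + 1 + 1 := by
      rw [Finset.card_image_of_injective _ hinj]; exact hcard
    have hcs : (e ⟨s, hs⟩).val.card = k + 1 + 1 := by
      rw [card_e_apply' he]; exact hcard
    exact (Finset.eq_of_subset_of_card_le hsub (by omega)).symm

end StabAux

/-- for `n ≥ 2`, the stabilizer of the layer `H_0` in the
automorphism group of the Hasse diagram of `∂Δⁿ` is isomorphic to
`Aut(∂Δⁿ)`. -/
theorem stab_iso_aut (n : ℕ) (hn : 2 ≤ n) :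
    Nonempty (stabH0 n ≃* autK (bdSimplex n)) := by
  have hn1 : 1 ≤ n := by omega
  have hinj : Function.Injective (psi n) := by
    intro a b hab
    have h1 : indPerm (a : Equiv.Perm (Fin (n + 1))) = indPerm (b : Equiv.Perm (Fin (n + 1))) :=
      Subtype.ext_iff.mp hab
    apply Subtype.ext; apply Equiv.ext; intro x
    have h2 := Equiv.ext_iff.mp h1 ⟨{x}, singleton_face hn1 x⟩
    have h3 := Subtype.ext_iff.mp h2
    rw [indPerm_apply, indPerm_apply, Finset.image_singleton, Finset.image_singleton] at h3
    exact Finset.singleton_injective h3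
  have hsurj : Function.Surjective (psi n) := by
    rintro ⟨e, he⟩
    have hsing : ∀ x : Fin (n + 1), ∃ y, (e ⟨{x}, singleton_face hn1 x⟩).val = {y} := by
      intro x
      have h : (e ⟨{x}, singleton_face hn1 x⟩).val.card = 1 := by
        rw [card_e_apply' he]; simp
      exact Finset.card_eq_one.mp h
    choose σ hσ using hsing
    have hsing' : ∀ x : Fin (n + 1), ∃ y, (e⁻¹ ⟨{x}, singleton_face hn1 x⟩).val = {y} := by
      intro x
      have h : (e⁻¹ ⟨{x}, singleton_face hn1 x⟩).val.card = 1 := by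
        rw [card_e_apply' ((stabH0 n).inv_mem he)]; simp
      exact Finset.card_eq_one.mp h
    choose τ hτ using hsing'
    have hlr : ∀ x, τ (σ x) = x := by
      intro x
      have h1 : (⟨{σ x}, singleton_face hn1 (σ x)⟩ : BdVert n) = e ⟨{x}, singleton_face hn1 x⟩ :=
        Subtype.ext (hσ x).symm
      have h2 := hτ (σ x)
      rw [h1, Equiv.Perm.coe_inv, Equiv.symm_apply_apply] at h2
      exact Finset.singleton_injective h2.symm
    have hrl : ∀ x, σ (τ x) = x := by
      intro x
      have h1 : (⟨{τ x}, singleton_face hn1 (τ x)⟩ : BdVert n) = e⁻¹ ⟨{x}, singleton_face hn1 x⟩ :=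
        Subtype.ext (hτ x).symm
      have h2 := hσ (τ x)
      rw [h1, Equiv.Perm.coe_inv, Equiv.apply_symm_apply] at h2
      exact Finset.singleton_injective h2.symm
    refine ⟨⟨⟨σ, τ, hlr, hrl⟩, mem_autK_bd _⟩, ?_⟩
    apply Subtype.ext; apply Equiv.ext; intro v; apply Subtype.ext
    show (indPerm ⟨σ, τ, hlr, hrl⟩ v).val = (e v).val
    rw [indPerm_apply]
    have hcv : 0 < v.val.card := Finset.card_pos.mpr v.2.1
    have hB := e_apply_eq_image hn1 he σ (Equiv.injective ⟨σ, τ, hlr, hrl⟩)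
      hσ (v.val.card - 1) v.val v.2 (by omega)
    exact hB.symm
  exact ⟨(MulEquiv.ofBijective (psi n) ⟨hinj, hsurj⟩).symm⟩
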